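/- For every M ≥ 2, every pairwise distinct μ₁,…,μ_M ∈ D, and every 1 ≤ k < M, the creation operators are antisymmetric under transposition of adjacent arguments: B_M(μ₁,…,μ_k, μ_{k+1},…,μ_M) = −B_M(μ₁,…,μ_{k+1}, μ_k,…,μ_M). -/

import Mathlib

noncomputable def Bop {A : Type*} [Ring A] [Algebra ℂ A] (X v : ℂ → A) : List ℂ → A
  | [] => 1
  | μ :: rest => v μ * Bop X v rest +
      (2:ℂ) • (X μ * ∑ i : Fin rest.length,
        (((-1:ℂ)^(i:ℕ) / (μ - rest.get i)) • Bop X v (rest.eraseIdx i)))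
termination_by l => l.length
decreasing_by
  all_goals simp [List.length_eraseIdx] <;> omega

/-- Remove the entries at (0-based) positions `i` and `j` from the list `l`. -/
def erase2 (l : List ℂ) (i j : ℕ) : List ℂ := (l.eraseIdx (max i j)).eraseIdx (min i j)

/-- Θ(i − j) for the Heaviside function Θ (Θ(x) = 1 for x > 0, Θ(x) = 0 for x ≤ 0). -/
def theta (i j : ℕ) : ℕ := if j < i then 1 else 0

/-- single-erasure coefficient -/
noncomputable def coeff (l : List ℂ) (μ : ℂ) (i : ℕ) : ℂ := (-1)^i / (μ - l.getD i 0)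

/-- double-erasure coefficient -/
noncomputable def dco (l : List ℂ) (μ : ℂ) (i k : ℕ) : ℂ :=
  (-1)^(k - theta k i) / (μ - l.getD k 0)

section Lemmas
variable {A : Type*} [Ring A] [Algebra ℂ A] (X v : ℂ → A)

lemma Bop_cons (μ : ℂ) (l : List ℂ) :
    Bop X v (μ :: l) = v μ * Bop X v l +
      (2:ℂ) • (X μ * ∑ i ∈ Finset.range l.length, coeff l μ i • Bop X v (l.eraseIdx i)) := by
  have h : ∀ i : Fin l.length, ((-1:ℂ)^(i:ℕ) / (μ - l.get i)) • Bop X v (l.eraseIdx i)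
      = coeff l μ (i:ℕ) • Bop X v (l.eraseIdx (i:ℕ)) := by
    intro i; unfold coeff; rw [List.getD_eq_getElem l 0 i.isLt]; rfl
  rw [Bop]
  simp_rw [h]
  rw [Fin.sum_univ_eq_sum_range (fun i => coeff l μ i • Bop X v (l.eraseIdx i)) l.length]

lemma erase_erase : ∀ (l : List ℂ) (i j : ℕ), i ≤ j →
    (l.eraseIdx i).eraseIdx j = (l.eraseIdx (j+1)).eraseIdx i
  | [], _, _, _ => by simp
  | a :: t, 0, j, _ => by simp
  | a :: t, (i+1), (j+1), h => by
      simp only [List.eraseIdx_cons_succ]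
      rw [erase_erase t i j (by omega)]
  | a :: t, (i+1), 0, h => by omega

lemma erase2_lt (l : List ℂ) {i j : ℕ} (h : j < i) :
    (l.eraseIdx i).eraseIdx j = erase2 l i j := by
  unfold erase2
  rw [Nat.max_eq_left h.le, Nat.min_eq_right h.le]

lemma erase2_ge (l : List ℂ) {i j : ℕ} (h : i ≤ j) :
    (l.eraseIdx i).eraseIdx j = erase2 l i (j+1) := by
  unfold erase2
  rw [Nat.max_eq_right (by omega), Nat.min_eq_left (by omega), erase_erase l i j h]

lemma erase2_comm (l : List ℂ) (i j : ℕ) : erase2 l i j = erase2 l j i := by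
  unfold erase2; rw [Nat.max_comm, Nat.min_comm]

lemma bop_inner_sum (μ : ℂ) (l : List ℂ) (i : ℕ) (hi : i < l.length) :
    ∑ j ∈ Finset.range (l.length - 1),
        coeff (l.eraseIdx i) μ j • Bop X v ((l.eraseIdx i).eraseIdx j)
    = ∑ k ∈ (Finset.range l.length).erase i, dco l μ i k • Bop X v (erase2 l i k) := by
  have hlen : (l.eraseIdx i).length = l.length - 1 := by
    rw [List.length_eraseIdx]; simp [hi]
  refine Finset.sum_nbij' (i := fun j => if j < i then j else j + 1)
    (j := fun k => if k < i then k else k - 1) ?_ ?_ ?_ ?_ ?_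
  · intro j hj; simp only [Finset.mem_range] at hj
    simp only [Finset.mem_erase, Finset.mem_range]
    split_ifs <;> omega
  · intro k hk; simp only [Finset.mem_erase, Finset.mem_range] at hk
    simp only [Finset.mem_range]
    split_ifs <;> omega
  · intro j hj; simp only [Finset.mem_range] at hj
    split_ifs <;> omega
  · intro k hk; simp only [Finset.mem_erase, Finset.mem_range] at hk
    split_ifs <;> omega
  · intro j hj
    simp only [Finset.mem_range] at hj
    have h1 : j < (l.eraseIdx i).length := by omega
    by_cases hji : j < i
    · rw [if_pos hji, ← erase2_lt l hji]
      congr 1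
      unfold coeff dco theta
      rw [List.getD_eq_getElem _ 0 h1, List.getElem_eraseIdx, dif_pos hji,
        if_neg (by omega : ¬ i < j), Nat.sub_zero,
        List.getD_eq_getElem l 0 (by omega : j < l.length)]
    · push_neg at hji
      rw [if_neg (by omega), ← erase2_ge l hji]
      congr 1
      unfold coeff dco theta
      rw [List.getD_eq_getElem _ 0 h1, List.getElem_eraseIdx, dif_neg (by omega),
        if_pos (by omega : i < j + 1), Nat.add_sub_cancel,
        List.getD_eq_getElem l 0 (by omega : j + 1 < l.length)]

lemma sum_erase_swap {M : Type*} [AddCommGroup M] (n : ℕ) (F : ℕ → ℕ → M) :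
    ∑ i ∈ Finset.range n, ∑ k ∈ (Finset.range n).erase i, F i k
    = ∑ i ∈ Finset.range n, ∑ k ∈ (Finset.range n).erase i, F k i := by
  have e1 : ∀ (G : ℕ → ℕ → M), ∑ i ∈ Finset.range n, ∑ k ∈ (Finset.range n).erase i, G i k
      = (∑ i ∈ Finset.range n, ∑ k ∈ Finset.range n, G i k) - ∑ i ∈ Finset.range n, G i i := by
    intro G
    rw [← Finset.sum_sub_distrib]
    exact Finset.sum_congr rfl fun i hi => Finset.sum_erase_eq_sub hi
  rw [e1, e1, Finset.sum_comm]

lemma scalar_cancel (l : List ℂ) (x y : ℂ) {i k : ℕ} (hik : i ≠ k) :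
    (-4) * coeff l x i * dco l y i k + (-4) * coeff l y k * dco l x k i = 0 := by
  unfold coeff dco theta
  rcases lt_or_gt_of_ne hik with h | h
  · rw [if_pos h, if_neg (by omega : ¬ k < i)]
    obtain ⟨m, rfl⟩ : ∃ m, k = m + 1 := ⟨k - 1, by omega⟩
    simp only [Nat.add_sub_cancel, Nat.sub_zero, pow_succ]
    ring
  · rw [if_neg (by omega : ¬ i < k), if_pos h]
    obtain ⟨m, rfl⟩ : ∃ m, i = m + 1 := ⟨i - 1, by omega⟩
    simp only [Nat.add_sub_cancel, Nat.sub_zero, pow_succ]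
    ring

lemma coeff_cons_succ (a : ℂ) (l : List ℂ) (μ : ℂ) (i : ℕ) :
    coeff (a::l) μ (i+1) = -(coeff l μ i) := by
  unfold coeff; rw [List.getD_cons_succ, pow_succ]; ring

lemma coeff_cons_zero (a : ℂ) (l : List ℂ) (μ : ℂ) :
    coeff (a::l) μ 0 = (1/(μ - a)) := by
  unfold coeff; rw [List.getD_cons_zero, pow_zero]

lemma bop_expand (x y : ℂ) (l : List ℂ) (h1 : X x * v y = v y * X x) :
    Bop X v (x::y::l) =
      (v x * v y) * Bop X v l
      + (2/(x-y)) • (X x * Bop X v l)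
      + (2:ℂ) • ∑ i ∈ Finset.range l.length,
          coeff l y i • (v x * (X y * Bop X v (l.eraseIdx i)))
      + (2:ℂ) • ∑ i ∈ Finset.range l.length,
          (-(coeff l x i)) • (v y * (X x * Bop X v (l.eraseIdx i)))
      + ∑ i ∈ Finset.range l.length, ∑ k ∈ (Finset.range l.length).erase i,
          ((-4) * coeff l x i * dco l y i k) • ((X x * X y) * Bop X v (erase2 l i k)) := by
  have hcomm : ∀ b : A, X x * (v y * b) = v y * (X x * b) := fun b => by
    rw [← mul_assoc, h1, mul_assoc]
  have hassoc : ∀ b : A, X x * (X y * b) = (X x * X y) * b := fun b =>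
    (mul_assoc _ _ _).symm
  have hvmul : ∀ b : A, v x * (v y * b) = (v x * v y) * b := fun b =>
    (mul_assoc _ _ _).symm
  rw [Bop_cons X v x (y::l), List.length_cons, Finset.sum_range_succ']
  simp only [List.eraseIdx_cons_succ, List.eraseIdx_cons_zero, coeff_cons_succ, coeff_cons_zero]
  rw [Bop_cons X v y l]
  have hsum : (∑ i ∈ Finset.range l.length, (-(coeff l x i)) • Bop X v (y :: l.eraseIdx i))
      = ∑ i ∈ Finset.range l.length, ((-(coeff l x i)) • (v y * Bop X v (l.eraseIdx i))
          + (-(coeff l x i) * 2) • (X y * ∑ k ∈ (Finset.range l.length).erase i,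
              dco l y i k • Bop X v (erase2 l i k))) := by
    refine Finset.sum_congr rfl fun i hi => ?_
    rw [Finset.mem_range] at hi
    have hlen : (l.eraseIdx i).length = l.length - 1 := by
      rw [List.length_eraseIdx]; simp [hi]
    rw [Bop_cons X v y (l.eraseIdx i), hlen, bop_inner_sum X v y l i hi, smul_add, smul_smul]
  rw [hsum, Finset.sum_add_distrib]
  simp only [mul_add, smul_add, Finset.mul_sum, Finset.smul_sum, mul_smul_comm, smul_smul,
    hcomm, hassoc, hvmul, Finset.sum_add_distrib]
  have h2 : (2:ℂ) * (1/(x-y)) = 2/(x-y) := by ring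
  have hds : ∑ i ∈ Finset.range l.length, ∑ k ∈ (Finset.range l.length).erase i,
      (2 * (-coeff l x i * 2 * dco l y i k)) • (X x * X y * Bop X v (erase2 l i k))
    = ∑ i ∈ Finset.range l.length, ∑ k ∈ (Finset.range l.length).erase i,
      ((-4) * coeff l x i * dco l y i k) • (X x * X y * Bop X v (erase2 l i k)) := by
    refine Finset.sum_congr rfl fun i _ => Finset.sum_congr rfl fun k _ => ?_
    congr 1; ring
  rw [h2, hds]
  abel

end Lemmas

section Main
variable {A : Type*} [Ring A] [Algebra ℂ A] (D : Set ℂ) (X v : ℂ → A)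
  (hXX : ∀ l ∈ D, ∀ m ∈ D, l ≠ m → X l * X m = X m * X l)
  (hXv : ∀ l ∈ D, ∀ m ∈ D, l ≠ m → X l * v m = v m * X l)
  (hvv : ∀ l ∈ D, ∀ m ∈ D, l ≠ m →
      v l * v m + v m * v l = (-2/(l - m)) • (X l - X m))

include hXX hXv hvv

lemma bop_key (x y : ℂ) (hx : x ∈ D) (hy : y ∈ D) (hxy : x ≠ y) (l : List ℂ) :
    Bop X v (x::y::l) = - Bop X v (y::x::l) := by
  rw [eq_neg_iff_add_eq_zero, bop_expand X v x y l (hXv x hx y hy hxy),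
    bop_expand X v y x l (hXv y hy x hx hxy.symm)]
  have hB : ∀ (c : ℕ → ℂ) (M : ℕ → A),
      (2:ℂ) • ∑ i ∈ Finset.range l.length, c i • M i
        + (2:ℂ) • ∑ i ∈ Finset.range l.length, (-(c i)) • M i = 0 := by
    intro c M
    rw [← smul_add, ← Finset.sum_add_distrib]
    have h0 : ∀ i ∈ Finset.range l.length, c i • M i + (-(c i)) • M i = 0 := fun i _ => by
      rw [neg_smul, add_neg_cancel]
    rw [Finset.sum_congr rfl h0, Finset.sum_const_zero, smul_zero]
  have hA : (v x * v y) * Bop X v l + (v y * v x) * Bop X v l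
      + ((2/(x-y)) • (X x * Bop X v l) + (2/(y-x)) • (X y * Bop X v l)) = 0 := by
    rw [← add_mul, hvv x hx y hy hxy, smul_mul_assoc, sub_mul]
    have hyx : (2:ℂ)/(y-x) = -(2/(x-y)) := by
      rw [show y - x = -(x-y) by ring, div_neg]
    rw [hyx]
    module
  have hD4 : (∑ i ∈ Finset.range l.length, ∑ k ∈ (Finset.range l.length).erase i,
        ((-4) * coeff l x i * dco l y i k) • ((X x * X y) * Bop X v (erase2 l i k)))
      + (∑ i ∈ Finset.range l.length, ∑ k ∈ (Finset.range l.length).erase i,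
        ((-4) * coeff l y i * dco l x i k) • ((X y * X x) * Bop X v (erase2 l i k))) = 0 := by
    have hyx : X y * X x = X x * X y := hXX y hy x hx hxy.symm
    have e2 : (∑ i ∈ Finset.range l.length, ∑ k ∈ (Finset.range l.length).erase i,
          ((-4) * coeff l y i * dco l x i k) • ((X y * X x) * Bop X v (erase2 l i k)))
        = ∑ i ∈ Finset.range l.length, ∑ k ∈ (Finset.range l.length).erase i,
          ((-4) * coeff l y k * dco l x k i) • ((X x * X y) * Bop X v (erase2 l i k)) := by
      rw [sum_erase_swap l.length
        (fun i k => ((-4) * coeff l y i * dco l x i k) • ((X y * X x) * Bop X v (erase2 l i k)))]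
      refine Finset.sum_congr rfl fun i _ => Finset.sum_congr rfl fun k _ => ?_
      rw [hyx, erase2_comm l k i]
    rw [e2, ← Finset.sum_add_distrib]
    refine Finset.sum_eq_zero fun i _ => ?_
    rw [← Finset.sum_add_distrib]
    refine Finset.sum_eq_zero fun k hk => ?_
    have hik : i ≠ k := fun h => (Finset.mem_erase.mp hk).1 h.symm
    rw [← add_smul, scalar_cancel l x y hik, zero_smul]
  have shuffle : ∀ a1 a2 a3 a4 a5 b1 b2 b3 b4 b5 : A,
      a1 + b1 + (a2 + b2) = 0 → a3 + b4 = 0 → b3 + a4 = 0 → a5 + b5 = 0 →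
      (a1 + a2 + a3 + a4 + a5) + (b1 + b2 + b3 + b4 + b5) = 0 := by
    intro a1 a2 a3 a4 a5 b1 b2 b3 b4 b5 h1 h2 h3 h4
    calc (a1 + a2 + a3 + a4 + a5) + (b1 + b2 + b3 + b4 + b5)
        = (a1 + b1 + (a2 + b2)) + ((a3 + b4) + ((b3 + a4) + (a5 + b5))) := by abel
      _ = 0 := by rw [h1, h2, h3, h4]; simp
  exact shuffle _ _ _ _ _ _ _ _ _ _ hA
    (hB (coeff l y) (fun i => v x * (X y * Bop X v (l.eraseIdx i))))
    (hB (coeff l x) (fun i => v y * (X x * Bop X v (l.eraseIdx i))))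
    hD4

lemma bop_main_aux : ∀ (n : ℕ) (l₁ l₂ : List ℂ) (x y : ℂ),
    l₁.length + l₂.length ≤ n →
    (l₁ ++ x :: y :: l₂).Pairwise (· ≠ ·) →
    (∀ μ ∈ l₁ ++ x :: y :: l₂, μ ∈ D) →
    Bop X v (l₁ ++ x :: y :: l₂) = - Bop X v (l₁ ++ y :: x :: l₂) := by
  intro n
  induction n with
  | zero =>
    intro l₁ l₂ x y hlen hdist hD
    have h0 : l₁ = [] := List.length_eq_zero_iff.mp (by omega)
    subst h0
    simp only [List.nil_append] at *
    rw [List.pairwise_cons] at hdist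
    exact bop_key D X v hXX hXv hvv x y (hD x (by simp)) (hD y (by simp))
      (hdist.1 y (by simp)) l₂
  | succ n ih =>
    intro l₁ l₂ x y hlen hdist hD
    cases l₁ with
    | nil =>
      simp only [List.nil_append] at *
      rw [List.pairwise_cons] at hdist
      exact bop_key D X v hXX hXv hvv x y (hD x (by simp)) (hD y (by simp))
        (hdist.1 y (by simp)) l₂
    | cons μ t =>
      simp only [List.cons_append] at hdist hD ⊢
      simp only [List.length_cons] at hlen
      rw [Bop_cons X v μ (t ++ x::y::l₂), Bop_cons X v μ (t ++ y::x::l₂),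
        show (t ++ y::x::l₂).length = (t ++ x::y::l₂).length by simp]
      have hN : (t ++ x::y::l₂).length = t.length + l₂.length + 2 := by
        simp [List.length_append]; omega
      -- head term via IH
      have hsub1 : List.Sublist (t ++ x::y::l₂) (μ :: (t ++ x::y::l₂)) := List.sublist_cons_self _ _
      have h1 : Bop X v (t ++ x::y::l₂) = - Bop X v (t ++ y::x::l₂) :=
        ih t l₂ x y (by omega) (hdist.sublist hsub1) (fun z hz => hD z (hsub1.subset hz))
      -- the sum
      have hsum : (∑ i ∈ Finset.range (t ++ x::y::l₂).length,
            coeff (t ++ x::y::l₂) μ i • Bop X v ((t ++ x::y::l₂).eraseIdx i))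
          = ∑ i ∈ Finset.range (t ++ x::y::l₂).length,
            -(coeff (t ++ y::x::l₂) μ i • Bop X v ((t ++ y::x::l₂).eraseIdx i)) := by
        refine Finset.sum_nbij'
          (i := fun a => if a = t.length then t.length + 1
            else if a = t.length + 1 then t.length else a)
          (j := fun a => if a = t.length then t.length + 1
            else if a = t.length + 1 then t.length else a) ?_ ?_ ?_ ?_ ?_
        · intro a ha; simp only [Finset.mem_range, hN] at *; split_ifs <;> omega
        · intro a ha; simp only [Finset.mem_range, hN] at *; split_ifs <;> omega
        · intro a ha; split_ifs <;> omega
        · intro a ha; split_ifs <;> omega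
        · intro a ha
          rw [Finset.mem_range, hN] at ha
          rcases eq_or_ne a t.length with h2 | h2
          · -- erasing x ↔ erasing y (swapped position)
            rw [if_pos h2, h2]
            have e1 : (t ++ x::y::l₂).eraseIdx t.length = t ++ y::l₂ := by
              rw [List.eraseIdx_append_of_length_le le_rfl, Nat.sub_self,
                List.eraseIdx_cons_zero]
            have e2 : (t ++ y::x::l₂).eraseIdx (t.length + 1) = t ++ y::l₂ := by
              rw [List.eraseIdx_append_of_length_le (by omega),
                show t.length + 1 - t.length = 1 by omega, List.eraseIdx_cons_succ,
                List.eraseIdx_cons_zero]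
            rw [e1, e2]
            unfold coeff
            rw [List.getD_append_right _ _ _ _ le_rfl, Nat.sub_self,
              List.getD_cons_zero,
              List.getD_append_right _ _ _ _ (by omega : t.length ≤ t.length + 1),
              show t.length + 1 - t.length = 1 by omega, List.getD_cons_succ,
              List.getD_cons_zero]
            rw [← neg_smul]
            congr 1
            rw [pow_succ]
            ring
          · rcases eq_or_ne a (t.length + 1) with h3 | h3
            · rw [if_neg h2, if_pos h3, h3]
              have e1 : (t ++ x::y::l₂).eraseIdx (t.length + 1) = t ++ x::l₂ := by
                rw [List.eraseIdx_append_of_length_le (by omega),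
                  show t.length + 1 - t.length = 1 by omega, List.eraseIdx_cons_succ,
                  List.eraseIdx_cons_zero]
              have e2 : (t ++ y::x::l₂).eraseIdx t.length = t ++ x::l₂ := by
                rw [List.eraseIdx_append_of_length_le le_rfl, Nat.sub_self,
                  List.eraseIdx_cons_zero]
              rw [e1, e2]
              unfold coeff
              rw [List.getD_append_right _ _ _ _ (by omega : t.length ≤ t.length + 1),
                show t.length + 1 - t.length = 1 by omega, List.getD_cons_succ,
                List.getD_cons_zero,
                List.getD_append_right _ _ _ _ le_rfl, Nat.sub_self,
                List.getD_cons_zero]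
              rw [← neg_smul]
              congr 1
              rw [pow_succ]
              ring
            · rw [if_neg h2, if_neg h3]
              rcases lt_or_ge a t.length with h4 | h4
              · -- erasure inside t
                have e1 : (t ++ x::y::l₂).eraseIdx a = t.eraseIdx a ++ x::y::l₂ :=
                  List.eraseIdx_append_of_lt_length h4 _
                have e2 : (t ++ y::x::l₂).eraseIdx a = t.eraseIdx a ++ y::x::l₂ :=
                  List.eraseIdx_append_of_lt_length h4 _
                have hsub : List.Sublist (t.eraseIdx a ++ x::y::l₂) (μ :: (t ++ x::y::l₂)) :=
                  ((List.eraseIdx_sublist t a).append (List.Sublist.refl _)).trans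
                    (List.sublist_cons_self _ _)
                have hIH : Bop X v (t.eraseIdx a ++ x::y::l₂)
                    = - Bop X v (t.eraseIdx a ++ y::x::l₂) :=
                  ih (t.eraseIdx a) l₂ x y
                    (by rw [List.length_eraseIdx]; simp [h4]; omega)
                    (hdist.sublist hsub) (fun z hz => hD z (hsub.subset hz))
                rw [e1, e2, hIH]
                unfold coeff
                rw [List.getD_append _ _ _ _ h4, List.getD_append _ _ _ _ h4, smul_neg]
              · -- erasure inside l₂
                obtain ⟨r, rfl⟩ : ∃ r, a = t.length + 2 + r := ⟨a - t.length - 2, by omega⟩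
                have hr : r < l₂.length := by omega
                have hd : t.length + 2 + r - t.length = r + 2 := by omega
                have e1 : (t ++ x::y::l₂).eraseIdx (t.length + 2 + r)
                    = t ++ x::y::(l₂.eraseIdx r) := by
                  rw [List.eraseIdx_append_of_length_le (by omega), hd,
                    List.eraseIdx_cons_succ, List.eraseIdx_cons_succ]
                have e2 : (t ++ y::x::l₂).eraseIdx (t.length + 2 + r)
                    = t ++ y::x::(l₂.eraseIdx r) := by
                  rw [List.eraseIdx_append_of_length_le (by omega), hd,
                    List.eraseIdx_cons_succ, List.eraseIdx_cons_succ]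
                have hsub : List.Sublist (t ++ x::y::(l₂.eraseIdx r)) (μ :: (t ++ x::y::l₂)) :=
                  ((List.Sublist.refl t).append
                    ((((l₂.eraseIdx_sublist r).cons₂ y).cons₂ x))).trans
                    (List.sublist_cons_self _ _)
                have hIH : Bop X v (t ++ x::y::(l₂.eraseIdx r))
                    = - Bop X v (t ++ y::x::(l₂.eraseIdx r)) :=
                  ih t (l₂.eraseIdx r) x y
                    (by rw [List.length_eraseIdx]; simp [hr]; omega)
                    (hdist.sublist hsub) (fun z hz => hD z (hsub.subset hz))
                rw [e1, e2, hIH]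
                unfold coeff
                rw [List.getD_append_right _ _ _ _ (by omega), hd,
                  List.getD_cons_succ, List.getD_cons_succ,
                  List.getD_append_right _ _ _ _ (by omega), hd,
                  List.getD_cons_succ, List.getD_cons_succ, smul_neg]
      rw [h1, hsum, Finset.sum_neg_distrib]
      simp only [mul_neg, smul_neg, neg_add]

end Main

theorem Bop_antisymm_adjacent {A : Type*} [Ring A] [Algebra ℂ A] (D : Set ℂ)
    (X v : ℂ → A)
    (hXX : ∀ l ∈ D, ∀ m ∈ D, l ≠ m → X l * X m = X m * X l)
    (hXv : ∀ l ∈ D, ∀ m ∈ D, l ≠ m → X l * v m = v m * X l)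
    (hvv : ∀ l ∈ D, ∀ m ∈ D, l ≠ m →
      v l * v m + v m * v l = (-2/(l - m)) • (X l - X m))
    (l₁ l₂ : List ℂ) (x y : ℂ)
    (hdist : (l₁ ++ x :: y :: l₂).Pairwise (· ≠ ·))
    (hD : ∀ μ ∈ l₁ ++ x :: y :: l₂, μ ∈ D) :
    Bop X v (l₁ ++ x :: y :: l₂) = - Bop X v (l₁ ++ y :: x :: l₂) := by
  exact bop_main_aux D X v hXX hXv hvv (l₁.length + l₂.length) l₁ l₂ x y le_rfl hdist hD
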